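/- Let G be a finite group and G₀ ⊆ G a subset such that for each two elements g, h ∈ G₀, the cyclic subgroup ⟨h⟩ is normal in ⟨g,h⟩ or the cyclic subgroup ⟨g⟩ is normal in ⟨g,h⟩. Then B(G₀) is a saturated submonoid of the free abelian monoid F(G₀) (equivalently, B(G₀) is a Krull monoid) if and only if the subgroup ⟨G₀⟩ generated by G₀ is abelian. -/

import Mathlib

/-- `S` is a product-one sequence over `G`: some ordering of its terms multiplies to `1`. -/
def IsProductOne {G : Type*} [Group G] (S : Multiset G) : Prop :=
  ∃ l : List G, (l : Multiset G) = S ∧ l.prod = 1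

/-- The set of products `π(S)` of all orderings of the terms of `S`. -/
def piSet {G : Type*} [Group G] (S : Multiset G) : Set G :=
  {g | ∃ l : List G, (l : Multiset G) = S ∧ l.prod = g}

/-- The set `Π(S)` of products of nontrivial subsequences of `S`. -/
def subseqProds {G : Type*} [Group G] (S : Multiset G) : Set G :=
  {g | ∃ T : Multiset G, T ≤ S ∧ T ≠ 0 ∧ g ∈ piSet T}

/-- `S` is product-one free. -/
def ProductOneFree {G : Type*} [Group G] (S : Multiset G) : Prop :=
  (1 : G) ∉ subseqProds S

/-- `S` is an atom of the monoid `B(G)` of product-one sequences: it is a nontrivial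
product-one sequence that is not the concatenation of two nontrivial product-one sequences. -/
def IsPOAtom {G : Type*} [Group G] (S : Multiset G) : Prop :=
  IsProductOne S ∧ S ≠ 0 ∧
    ∀ T₁ T₂ : Multiset G, IsProductOne T₁ → IsProductOne T₂ → T₁ + T₂ = S →
      T₁ = 0 ∨ T₂ = 0

/-- The large Davenport constant `D(G)`: the supremum of lengths of atoms of `B(G)`. -/
noncomputable def largeD (G : Type*) [Group G] : ℕ :=
  sSup {n : ℕ | ∃ S : Multiset G, IsPOAtom S ∧ Multiset.card S = n}

/-- The small Davenport constant `d(G)`: the supremum of lengths of product-one free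
sequences over `G`. -/
noncomputable def smalld (G : Type*) [Group G] : ℕ :=
  sSup {n : ℕ | ∃ S : Multiset G, ProductOneFree S ∧ Multiset.card S = n}

private lemma stmt7_key {G : Type*} [Group G] [Finite G] [DecidableEq G] (G₀ : Set G)
    (hsat : ∀ S T : Multiset G, (∀ x ∈ S, x ∈ G₀) → (∀ x ∈ T, x ∈ G₀) →
        IsProductOne S → IsProductOne T → T ≤ S → IsProductOne (S - T))
    {g h : G} (hg : g ∈ G₀) (hh : h ∈ G₀)
    (hnorm : Subgroup.closure {g, h} ≤ Subgroup.normalizer (Subgroup.zpowers g : Set G)) :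
    g * h = h * g := by
  by_contra hgh
  have hgne : g ≠ h := fun e => hgh (by rw [e])
  have hg1 : g ≠ 1 := fun e => hgh (by simp [e])
  set n := orderOf g with hn
  have hnpos : 0 < n := orderOf_pos g
  have hmpos : 0 < orderOf h := orderOf_pos h
  set m := orderOf h with hm
  -- h is in the normalizer of ⟨g⟩
  have hhmem : h ∈ Subgroup.closure {g, h} :=
    Subgroup.subset_closure (by simp)
  have hconj : h * g * h⁻¹ ∈ Subgroup.zpowers g := by
    exact (Subgroup.mem_normalizer_iff.mp (hnorm hhmem) g).mp (Subgroup.mem_zpowers g)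
  obtain ⟨k, hk⟩ := hconj
  -- reduce exponent mod n
  set k' : ℕ := (k % (n : ℤ)).toNat with hk'
  have hknat : g ^ k' = h * g * h⁻¹ := by
    have h1 : ((k % (n : ℤ)).toNat : ℤ) = k % (n : ℤ) :=
      Int.toNat_of_nonneg (Int.emod_nonneg k (by exact_mod_cast hnpos.ne'))
    calc g ^ k' = g ^ ((k' : ℤ)) := (zpow_natCast g k').symm
    _ = g ^ (k % (n : ℤ)) := by rw [hk', h1]
    _ = g ^ k := zpow_mod_orderOf g k
    _ = h * g * h⁻¹ := hk
  have hk'lt : k' < n := by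
    have := Int.emod_lt_of_pos k (b := (n : ℤ)) (by exact_mod_cast hnpos)
    omega
  have hk'ne1 : k' ≠ 1 := by
    intro e
    rw [e, pow_one] at hknat
    apply hgh
    have h2 : h * g * h⁻¹ * h = g * h := by rw [← hknat]
    rw [inv_mul_cancel_right] at h2
    exact h2.symm
  have hk'ne0 : k' ≠ 0 := by
    intro e
    rw [e, pow_zero] at hknat
    apply hg1
    have : h * g * h⁻¹ = 1 := hknat.symm
    calc g = h⁻¹ * (h * g * h⁻¹) * h := by group
    _ = 1 := by rw [this]; group
  have hk'2 : 2 ≤ k' := by omega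
  clear_value n m k'
  clear hk' hk
  -- the key relation
  have hrel : h * g = g ^ k' * h := by
    rw [hknat, inv_mul_cancel_right]
  -- the sequences
  set S : Multiset G := Multiset.replicate n g + Multiset.replicate m h with hS
  set T : Multiset G := Multiset.replicate (n - k' + 1) g + Multiset.replicate m h with hT
  have hSmem : ∀ x ∈ S, x ∈ G₀ := by
    intro x hx
    rcases Multiset.mem_add.mp hx with hx | hx <;>
      rw [Multiset.eq_of_mem_replicate hx] <;> assumption
  have hTmem : ∀ x ∈ T, x ∈ G₀ := by
    intro x hx
    rcases Multiset.mem_add.mp hx with hx | hx <;>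
      rw [Multiset.eq_of_mem_replicate hx] <;> assumption
  have hSpo : IsProductOne S := by
    refine ⟨List.replicate n g ++ List.replicate m h, ?_, ?_⟩
    · rw [← Multiset.coe_add, Multiset.coe_replicate, Multiset.coe_replicate]
    · rw [List.prod_append, List.prod_replicate, List.prod_replicate,
        hn, hm, pow_orderOf_eq_one, pow_orderOf_eq_one, one_mul]
  have hTpo : IsProductOne T := by
    refine ⟨h :: g :: (List.replicate (m - 1) h ++ List.replicate (n - k') g), ?_, ?_⟩
    · rw [← Multiset.cons_coe, ← Multiset.cons_coe, ← Multiset.coe_add,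
        Multiset.coe_replicate, Multiset.coe_replicate]
      ext a
      simp only [Multiset.count_cons, Multiset.count_add, Multiset.count_replicate, hT]
      split_ifs <;> first | omega | (exfalso; subst_vars; contradiction)
    · have : h * (g * ((List.replicate (m-1) h).prod * (List.replicate (n-k') g).prod)) = 1 := by
        rw [List.prod_replicate, List.prod_replicate, ← mul_assoc, hrel]
        have hhm : h * h ^ (m - 1) = h ^ m := by
          conv_rhs => rw [show m = 1 + (m-1) by omega]
          rw [pow_add, pow_one]
        calc g ^ k' * h * (h ^ (m-1) * g ^ (n-k'))
            = g ^ k' * (h * h ^ (m-1)) * g ^ (n-k') := by group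
          _ = g ^ k' * h ^ m * g ^ (n-k') := by rw [hhm]
          _ = g ^ k' * g ^ (n-k') := by rw [hm, pow_orderOf_eq_one, mul_one]
          _ = g ^ (k' + (n-k')) := by rw [pow_add]
          _ = g ^ n := by congr 1; omega
          _ = 1 := by rw [hn, pow_orderOf_eq_one]
      simpa using this
  have hTS : T ≤ S := by
    rw [Multiset.le_iff_count]
    intro a
    simp only [Multiset.count_add, Multiset.count_replicate, hS, hT]
    split_ifs <;> first | omega | (exfalso; subst_vars; contradiction)
  have hdiff : S - T = Multiset.replicate (k' - 1) g := by
    ext a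
    simp only [Multiset.count_sub, Multiset.count_add, Multiset.count_replicate, hS, hT]
    split_ifs <;> first | omega | (exfalso; subst_vars; contradiction)
  obtain ⟨l, hl, hlp⟩ := hsat S T hSmem hTmem hSpo hTpo hTS
  rw [hdiff] at hl
  have hlen : l.length = k' - 1 := by
    have := congrArg Multiset.card hl
    simpa using this
  have hall : ∀ x ∈ l, x = g := by
    intro x hx
    have : x ∈ (l : Multiset G) := hx
    rw [hl] at this
    exact Multiset.eq_of_mem_replicate this
  have hpow : g ^ (k' - 1) = 1 := by
    rw [← hlen, ← List.prod_eq_pow_card l g hall, hlp]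
  have hdvd : n ∣ (k' - 1) := hn ▸ orderOf_dvd_of_pow_eq_one hpow
  have := Nat.le_of_dvd (by omega) hdvd
  omega


private lemma stmt7_easy {G : Type*} [Group G] [DecidableEq G] (G₀ : Set G)
    (hab : ∀ a ∈ Subgroup.closure G₀, ∀ b ∈ Subgroup.closure G₀, a * b = b * a)
    (S T : Multiset G) (hS : ∀ x ∈ S, x ∈ G₀) (hT : ∀ x ∈ T, x ∈ G₀)
    (hSpo : IsProductOne S) (hTpo : IsProductOne T) (hTS : T ≤ S) :
    IsProductOne (S - T) := by
  obtain ⟨lS, hlS, hlSp⟩ := hSpo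
  obtain ⟨lT, hlT, hlTp⟩ := hTpo
  refine ⟨(S - T).toList, Multiset.coe_toList _, ?_⟩
  have hperm : (lT ++ (S - T).toList : Multiset G) = (lS : Multiset G) := by
    rw [← Multiset.coe_add, hlT, Multiset.coe_toList, hlS] at *
    exact add_tsub_cancel_of_le hTS
  have hmem : ∀ x ∈ lT ++ (S - T).toList, x ∈ G₀ := by
    intro x hx
    rcases List.mem_append.mp hx with hx | hx
    · exact hT x (by rw [← hlT]; exact hx)
    · have : x ∈ S - T := by
        rw [← Multiset.coe_toList (S - T)]; exact hx
      exact hS x (Multiset.mem_of_le (tsub_le_self) this)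
  have hpair : (lT ++ (S - T).toList).Pairwise Commute := by
    refine List.pairwise_of_forall_mem_list ?_
    intro x hx y hy
    exact hab x (Subgroup.subset_closure (hmem x hx)) y (Subgroup.subset_closure (hmem y hy))
  have := (Multiset.coe_eq_coe.mp hperm).prod_eq' hpair
  rw [List.prod_append, hlTp, one_mul] at this
  rw [this, hlSp]

/-- Let `G₀ ⊆ G` be a subset of a finite group such that for each `g, h ∈ G₀`, `⟨h⟩` is
normal in `⟨g, h⟩` or `⟨g⟩` is normal in `⟨g, h⟩`. Then `B(G₀)` is saturated in the free
abelian monoid `F(G₀)` (equivalently, `B(G₀)` is Krull) if and only if `⟨G₀⟩` is abelian. -/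
theorem stmt7 {G : Type*} [Group G] [Finite G] [DecidableEq G] (G₀ : Set G)
    (hP : ∀ g ∈ G₀, ∀ h ∈ G₀,
        Subgroup.closure {g, h} ≤ Subgroup.normalizer (Subgroup.zpowers h : Set G) ∨
        Subgroup.closure {g, h} ≤ Subgroup.normalizer (Subgroup.zpowers g : Set G)) :
    (∀ S T : Multiset G, (∀ x ∈ S, x ∈ G₀) → (∀ x ∈ T, x ∈ G₀) →
        IsProductOne S → IsProductOne T → T ≤ S → IsProductOne (S - T)) ↔
      (∀ a ∈ Subgroup.closure G₀, ∀ b ∈ Subgroup.closure G₀, a * b = b * a) := by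
  constructor
  · intro hsat
    have hcomm : ∀ g ∈ G₀, ∀ h ∈ G₀, g * h = h * g := by
      intro g hg h hh
      rcases hP g hg h hh with hc | hc
      · have := stmt7_key G₀ hsat hh hg (by rw [Set.pair_comm]; exact hc)
        exact this.symm
      · exact stmt7_key G₀ hsat hg hh hc
    have h1 : ∀ g ∈ G₀, ∀ b ∈ Subgroup.closure G₀, g * b = b * g := by
      intro g hg b hb
      have : Subgroup.closure G₀ ≤ Subgroup.centralizer {g} := by
        rw [Subgroup.closure_le]
        intro x hx
        exact Subgroup.mem_centralizer_singleton_iff.mpr (hcomm x hx g hg)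
      exact (Subgroup.mem_centralizer_singleton_iff.mp (this hb)).symm
    intro a ha b hb
    have : Subgroup.closure G₀ ≤ Subgroup.centralizer {b} := by
      rw [Subgroup.closure_le]
      intro x hx
      exact Subgroup.mem_centralizer_singleton_iff.mpr (h1 x hx b hb)
    exact Subgroup.mem_centralizer_singleton_iff.mp (this ha)
  · intro hab S T hS hT hSpo hTpo hTS
    exact stmt7_easy G₀ hab S T hS hT hSpo hTpo hTS
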